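/- Let p be the binary Markov random field distribution on {−1,1}^n associated to a graph G with clique set 𝒞 and potentials θ_C, and let γ := max_{u∈[n]} Σ_{l=1}^r Σ_{i_2<⋯<i_l} |θ^{u i_2⋯i_l}|_max, where |θ^{u i_2⋯i_l}|_max is the maximum absolute value of an entry of the potential of the clique {u, i_2, …, i_l} (zero if it is not a clique in 𝒞). Then for every vertex u, every x_u ∈ {−1,1}, and every configuration y ∈ {−1,1}^{[n]∖{u}} of the remaining variables, the conditional probability satisfies p(X_u = x_u | X_{[n]∖{u}} = y) ≥ (1/2) exp(−2γ) = δ. -/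

import Mathlib

open Finset

/-- The spin values `{-1, 1}`. -/
abbrev Spin : Type := ({-1, 1} : Finset ℤ)

/-- The binary Markov random field distribution on `{-1,1}^n` with clique set `𝒞`
and potentials `θ C : {-1,1}^C → ℝ`. -/
noncomputable def mrfP {n : ℕ} (𝒞 : Finset (Finset (Fin n)))
    (θ : (C : Finset (Fin n)) → (↥C → Spin) → ℝ) (x : Fin n → Spin) : ℝ :=
  Real.exp (∑ C ∈ 𝒞, θ C (fun i => x i.1)) /
    ∑ y : Fin n → Spin, Real.exp (∑ C ∈ 𝒞, θ C (fun i => y i.1))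

/-- Extend a configuration `y` on `[n] \ {u}` to a full configuration taking
value `a` at `u`. -/
def extendAt {n : ℕ} (u : Fin n) (a : Spin) (y : {v : Fin n // v ≠ u} → Spin) :
    Fin n → Spin :=
  fun v => if h : v = u then a else y ⟨v, h⟩

/-- `|θ^C|_max`: the maximum absolute value of an entry of the potential of the
clique `C`, taken to be zero if `C` is not a clique in `𝒞`. -/
noncomputable def thetaMax {n : ℕ} (𝒞 : Finset (Finset (Fin n)))
    (θ : (C : Finset (Fin n)) → (↥C → Spin) → ℝ) (C : Finset (Fin n)) : ℝ :=
  if C ∈ 𝒞 then ⨆ y : ↥C → Spin, |θ C y| else 0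

/-- `Σ_{l=1}^{r} Σ_{i_2<⋯<i_l} |θ^{u i_2 ⋯ i_l}|_max`, the inner sum running over
tuples `i_2 < ⋯ < i_l` of vertices in `[n] ∖ {u}` (equivalently, over
`(l−1)`-element subsets `T` of `[n] ∖ {u}`, via `{u, i_2, …, i_l} = insert u T`). -/
noncomputable def gammaAt {n : ℕ} (𝒞 : Finset (Finset (Fin n)))
    (θ : (C : Finset (Fin n)) → (↥C → Spin) → ℝ) (r : ℕ) (u : Fin n) : ℝ :=
  ∑ l ∈ Finset.Icc 1 r, ∑ T ∈ (Finset.univ.erase u).powersetCard (l - 1),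
    thetaMax 𝒞 θ (insert u T)

instance : Nonempty Spin := ⟨⟨1, by decide⟩⟩

lemma thetaMax_nonneg {n : ℕ} (𝒞 : Finset (Finset (Fin n)))
    (θ : (C : Finset (Fin n)) → (↥C → Spin) → ℝ) (C : Finset (Fin n)) :
    0 ≤ thetaMax 𝒞 θ C := by
  unfold thetaMax
  split
  · exact le_ciSup_of_le (Finite.bddAbove_range _) (Classical.arbitrary _) (abs_nonneg _)
  · exact le_refl 0

lemma abs_theta_le {n : ℕ} {𝒞 : Finset (Finset (Fin n))}
    (θ : (C : Finset (Fin n)) → (↥C → Spin) → ℝ) {C : Finset (Fin n)}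
    (hC : C ∈ 𝒞) (z : ↥C → Spin) : |θ C z| ≤ thetaMax 𝒞 θ C := by
  rw [thetaMax, if_pos hC]
  exact le_ciSup (f := fun y => |θ C y|) (Finite.bddAbove_range _) z

lemma sum_thetaMax_le {n : ℕ} (𝒞 : Finset (Finset (Fin n)))
    (θ : (C : Finset (Fin n)) → (↥C → Spin) → ℝ) (r : ℕ)
    (hrwise : ∀ C ∈ 𝒞, C.card ≤ r) (u : Fin n) :
    ∑ C ∈ 𝒞.filter (fun C => u ∈ C), thetaMax 𝒞 θ C ≤ gammaAt 𝒞 θ r u := by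
  classical
  rw [gammaAt,
    ← Finset.sum_fiberwise_of_maps_to (g := Finset.card)
      (t := Finset.Icc 1 r) (fun C hC => by
        rw [Finset.mem_filter] at hC
        exact Finset.mem_Icc.mpr ⟨Finset.one_le_card.mpr ⟨u, hC.2⟩, hrwise C hC.1⟩)]
  refine Finset.sum_le_sum fun l _ => ?_
  have hmemu : ∀ C ∈ ((𝒞.filter fun C => u ∈ C).filter fun C => C.card = l), u ∈ C := by
    intro C hC
    simp only [Finset.mem_filter] at hC
    exact hC.1.2
  calc ∑ C ∈ ((𝒞.filter fun C => u ∈ C).filter fun C => C.card = l), thetaMax 𝒞 θ C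
      = ∑ C ∈ ((𝒞.filter fun C => u ∈ C).filter fun C => C.card = l),
          thetaMax 𝒞 θ (insert u (C.erase u)) := by
        refine Finset.sum_congr rfl fun C hC => ?_
        rw [Finset.insert_erase (hmemu C hC)]
    _ = ∑ T ∈ ((𝒞.filter fun C => u ∈ C).filter fun C => C.card = l).image
          (fun C => C.erase u), thetaMax 𝒞 θ (insert u T) := by
        refine Eq.symm (Finset.sum_image ?_)
        intro C hC C' hC' h
        rw [← Finset.insert_erase (hmemu C hC), show C.erase u = C'.erase u from h, Finset.insert_erase (hmemu C' hC')]
    _ ≤ ∑ T ∈ (Finset.univ.erase u).powersetCard (l - 1), thetaMax 𝒞 θ (insert u T) := by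
        refine Finset.sum_le_sum_of_subset_of_nonneg ?_
          (fun T _ _ => thetaMax_nonneg 𝒞 θ _)
        intro T hT
        rw [Finset.mem_image] at hT
        obtain ⟨C, hC, rfl⟩ := hT
        simp only [Finset.mem_filter] at hC
        rw [Finset.mem_powersetCard]
        exact ⟨Finset.erase_subset_erase u (Finset.subset_univ C),
          by rw [Finset.card_erase_of_mem hC.1.2, hC.2]⟩

/-- **Lower bound `δ` on conditional probabilities.**  For an `r`-wise binary MRF
`p` on a graph `G` with clique set `𝒞` and potentials `θ`, with
`γ := max_u Σ_{l=1}^r Σ_{i_2<⋯<i_l} |θ^{u i_2⋯i_l}|_max`, every conditional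
probability of a single spin given all the others is at least
`δ = (1/2)·exp(−2γ)`:  `p(X_u = x_u | X_{[n]∖{u}} = y) ≥ (1/2) exp(−2γ)`.
Here `p(X_u = a | X_{[n]∖{u}} = y) = p(ext_a y) / ∑_b p(ext_b y)`. -/
theorem cond_prob_ge_delta {n : ℕ} (G : SimpleGraph (Fin n))
    (𝒞 : Finset (Finset (Fin n)))
    (θ : (C : Finset (Fin n)) → (↥C → Spin) → ℝ)
    (hclique : ∀ C ∈ 𝒞, G.IsClique (C : Set (Fin n)))
    (r : ℕ) (hrwise : ∀ C ∈ 𝒞, C.card ≤ r)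
    (u : Fin n) (a : Spin) (y : {v : Fin n // v ≠ u} → Spin) :
    (1 / 2 : ℝ) *
        Real.exp (-2 * Finset.univ.sup' ⟨u, Finset.mem_univ u⟩ (gammaAt 𝒞 θ r))
      ≤ mrfP 𝒞 θ (extendAt u a y) / (∑ b : Spin, mrfP 𝒞 θ (extendAt u b y)) := by
  classical
  set γ : ℝ := Finset.univ.sup' ⟨u, Finset.mem_univ u⟩ (gammaAt 𝒞 θ r) with hγ
  have hγu : gammaAt 𝒞 θ r u ≤ γ := Finset.le_sup' _ (Finset.mem_univ u)
  set f : Spin → ℝ := fun b => ∑ C ∈ 𝒞, θ C (fun i => extendAt u b y i.1) with hf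
  set Z : ℝ := ∑ y' : Fin n → Spin, Real.exp (∑ C ∈ 𝒞, θ C (fun i => y' i.1)) with hZ
  have hZpos : 0 < Z :=
    Finset.sum_pos (fun _ _ => Real.exp_pos _) Finset.univ_nonempty
  have key : ∀ b : Spin, f b ≤ 2 * γ + f a := by
    intro b
    have e0 : ∀ C ∈ 𝒞.filter (fun C => ¬ u ∈ C),
        θ C (fun i => extendAt u b y i.1) - θ C (fun i => extendAt u a y i.1) = 0 := by
      intro C hC
      rw [Finset.mem_filter] at hC
      have : (fun i : ↥C => extendAt u b y i.1) = fun i => extendAt u a y i.1 := by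
        funext i
        have hiu : (i.1 : Fin n) ≠ u := fun h => hC.2 (h ▸ i.2)
        simp [extendAt, hiu]
      rw [this, sub_self]
    have h1 : f b - f a ≤ 2 * gammaAt 𝒞 θ r u := by
      calc f b - f a
          = ∑ C ∈ 𝒞, (θ C (fun i => extendAt u b y i.1)
              - θ C (fun i => extendAt u a y i.1)) := by
            rw [hf, Finset.sum_sub_distrib]
        _ = (∑ C ∈ 𝒞.filter (fun C => u ∈ C), (θ C (fun i => extendAt u b y i.1)
              - θ C (fun i => extendAt u a y i.1)))
            + ∑ C ∈ 𝒞.filter (fun C => ¬ u ∈ C), (θ C (fun i => extendAt u b y i.1)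
              - θ C (fun i => extendAt u a y i.1)) :=
            (Finset.sum_filter_add_sum_filter_not 𝒞 _ _).symm
        _ = ∑ C ∈ 𝒞.filter (fun C => u ∈ C), (θ C (fun i => extendAt u b y i.1)
              - θ C (fun i => extendAt u a y i.1)) := by
            rw [Finset.sum_eq_zero e0, add_zero]
        _ ≤ ∑ C ∈ 𝒞.filter (fun C => u ∈ C), 2 * thetaMax 𝒞 θ C := by
            refine Finset.sum_le_sum fun C hC => ?_
            have hC𝒞 := (Finset.mem_filter.mp hC).1
            have h1 := abs_le.mp (abs_theta_le θ hC𝒞 (fun i => extendAt u b y i.1))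
            have h2 := abs_le.mp (abs_theta_le θ hC𝒞 (fun i => extendAt u a y i.1))
            linarith
        _ = 2 * ∑ C ∈ 𝒞.filter (fun C => u ∈ C), thetaMax 𝒞 θ C := by
            rw [Finset.mul_sum]
        _ ≤ 2 * gammaAt 𝒞 θ r u := by
            linarith [sum_thetaMax_le 𝒞 θ r hrwise u]
    linarith
  have hDpos : 0 < ∑ b : Spin, Real.exp (f b) :=
    Finset.sum_pos (fun _ _ => Real.exp_pos _) Finset.univ_nonempty
  have hrw : mrfP 𝒞 θ (extendAt u a y) / (∑ b : Spin, mrfP 𝒞 θ (extendAt u b y))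
      = Real.exp (f a) / ∑ b : Spin, Real.exp (f b) := by
    have h1 : ∀ b : Spin, mrfP 𝒞 θ (extendAt u b y) = Real.exp (f b) / Z := fun b => rfl
    rw [h1]
    simp only [h1]
    rw [← Finset.sum_div]
    field_simp
  rw [hrw, le_div_iff₀ hDpos]
  have hD : (∑ b : Spin, Real.exp (f b)) ≤ 2 * Real.exp (2 * γ + f a) := by
    calc (∑ b : Spin, Real.exp (f b))
        ≤ ∑ _b : Spin, Real.exp (2 * γ + f a) :=
          Finset.sum_le_sum fun b _ => Real.exp_le_exp.mpr (key b)
      _ = 2 * Real.exp (2 * γ + f a) := by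
          rw [Finset.sum_const, Finset.card_univ, nsmul_eq_mul]
          norm_num [Fintype.card_coe]
  have hexp : Real.exp (-2 * γ) * Real.exp (2 * γ + f a) = Real.exp (f a) := by
    rw [← Real.exp_add]; ring_nf
  nlinarith [Real.exp_pos (-2 * γ), Real.exp_pos (2 * γ + f a), hD,
    mul_le_mul_of_nonneg_left hD (le_of_lt (mul_pos (by norm_num : (0:ℝ) < 1/2)
      (Real.exp_pos (-2 * γ))))]
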